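/- arXiv:0903.4973 — 2 statements merged into one kernel-verified Lean document; each statement's English description precedes it below -/
import Mathlib

section
/- The Mùi invariant in m+1 variables factors as V_{m+1}(t_1,…,t_m,X) = ∏_{λ ∈ F_p^m} (λ_1 t_1 + ⋯ + λ_m t_m + X), and as a function of the last variable X it is additive: V_{m+1}(t_1,…,t_m, X + Y) = V_{m+1}(t_1,…,t_m, X) + V_{m+1}(t_1,…,t_m, Y) in F_p[t_1,…,t_m,X,Y]. -/
open MvPolynomial Finset

/-- `V_{m+1}(t_1,…,t_m, u) = ∏_{λ ∈ F_p^m} (λ_1 t_1 + ⋯ + λ_m t_m + u)`, as a function of a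
polynomial `u` in the ring `F_p[t_1,…,t_m,X,Y]` (variables `Sum.inl i` are the `t_i`,
`Sum.inr false` is `X` and `Sum.inr true` is `Y`). -/
noncomputable def muiAt (p : ℕ) [Fact p.Prime] (m : ℕ)
    (u : MvPolynomial (Fin m ⊕ Bool) (ZMod p)) : MvPolynomial (Fin m ⊕ Bool) (ZMod p) :=
  ∏ lam : Fin m → ZMod p, ((∑ i : Fin m, C (lam i) * X (Sum.inl i)) + u)

namespace MuiAux

variable (p : ℕ) [Fact p.Prime] (m : ℕ)

/-- The linear form `λ · t`. -/
noncomputable def ell (lam : Fin m → ZMod p) : MvPolynomial (Fin m ⊕ Bool) (ZMod p) :=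
  ∑ i : Fin m, C (lam i) * X (Sum.inl i)

lemma ell_add (a b : Fin m → ZMod p) : ell p m (a + b) = ell p m a + ell p m b := by
  simp [ell, add_mul, Finset.sum_add_distrib, map_add]

lemma ell_injective : Function.Injective (ell p m) := by
  intro a b h
  funext j
  have := congrArg (MvPolynomial.eval (fun v => if v = Sum.inl j then (1 : ZMod p) else 0)) h
  simpa [ell, Sum.inl.injEq, apply_ite, Finset.sum_ite_eq'] using this

noncomputable def P : Polynomial (MvPolynomial (Fin m ⊕ Bool) (ZMod p)) :=
  ∏ lam : Fin m → ZMod p, (Polynomial.X + Polynomial.C (ell p m lam))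

lemma eval_P (u : MvPolynomial (Fin m ⊕ Bool) (ZMod p)) :
    (P p m).eval u = muiAt p m u := by
  rw [P, muiAt, Polynomial.eval_prod]
  refine Finset.prod_congr rfl fun lam _ => ?_
  rw [Polynomial.eval_add, Polynomial.eval_X, Polynomial.eval_C, ell, add_comm]

lemma monic_P : (P p m).Monic :=
  Polynomial.monic_prod_of_monic _ _ fun _ _ => Polynomial.monic_X_add_C _

lemma natDegree_P : (P p m).natDegree = Fintype.card (Fin m → ZMod p) := by
  rw [P, Polynomial.natDegree_prod]
  · simp [Polynomial.natDegree_X_add_C]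
  · intro lam _
    exact (Polynomial.monic_X_add_C _).ne_zero

lemma eval_P_ell (lam : Fin m → ZMod p) : (P p m).eval (ell p m lam) = 0 := by
  rw [P, Polynomial.eval_prod]
  refine Finset.prod_eq_zero (Finset.mem_univ (-lam)) ?_
  have : ell p m lam + ell p m (-lam) = 0 := by
    rw [← ell_add]; simp [ell]
  simp [this]

lemma eval_P_add_ell (lam : Fin m → ZMod p) (u : MvPolynomial (Fin m ⊕ Bool) (ZMod p)) :
    (P p m).eval (ell p m lam + u) = (P p m).eval u := by
  rw [P, Polynomial.eval_prod, Polynomial.eval_prod]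
  simp only [Polynomial.eval_add, Polynomial.eval_X, Polynomial.eval_C]
  have h : ∀ l, ell p m lam + u + ell p m l = u + ell p m (Equiv.addLeft lam l) := by
    intro l
    simp only [Equiv.coe_addLeft, ell_add]
    ring
  rw [Finset.prod_congr rfl fun l _ => h l,
    Equiv.prod_comp (Equiv.addLeft lam) (fun l => u + ell p m l)]

end MuiAux

open MuiAux in
/-- The Mùi invariant is additive in its last variable:
`V_{m+1}(t_1,…,t_m, X + Y) = V_{m+1}(t_1,…,t_m, X) + V_{m+1}(t_1,…,t_m, Y)`
in `F_p[t_1,…,t_m,X,Y]`. -/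
theorem mui_additive_last_variable (p : ℕ) [Fact p.Prime] (m : ℕ) :
    muiAt p m (X (Sum.inr false) + X (Sum.inr true)) =
      muiAt p m (X (Sum.inr false)) + muiAt p m (X (Sum.inr true)) := by
  set Y : MvPolynomial (Fin m ⊕ Bool) (ZMod p) := X (Sum.inr true) with hY
  set N := Fintype.card (Fin m → ZMod p) with hN
  have hNpos : 0 < N := Fintype.card_pos
  set Q : Polynomial (MvPolynomial (Fin m ⊕ Bool) (ZMod p)) :=
    (P p m).comp (Polynomial.X + Polynomial.C Y) with hQ
  have hQmonic : Q.Monic := (monic_P p m).comp_X_add_C _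
  have hQdeg : Q.natDegree = N := by
    rw [hQ, Polynomial.natDegree_comp]
    simp [natDegree_P, Polynomial.natDegree_X_add_C, hN]
  have hPdeg : (P p m).natDegree = N := natDegree_P p m
  set D := Q - P p m - Polynomial.C ((P p m).eval Y) with hD
  have hDzero : D = 0 := by
    by_cases h0 : D = 0
    · exact h0
    refine Polynomial.eq_zero_of_natDegree_lt_card_of_eval_eq_zero D (ell_injective p m) ?_ ?_
    · intro lam
      have h1 : Q.eval (ell p m lam) = (P p m).eval (ell p m lam + Y) := by
        simp [hQ, Polynomial.eval_comp]
      simp [hD, h1, eval_P_add_ell, eval_P_ell]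
    · rw [← hN, Polynomial.natDegree_lt_iff_degree_lt h0]
      rw [Polynomial.degree_lt_iff_coeff_zero]
      intro k hk
      rcases eq_or_lt_of_le hk with hk' | hk'
      · have hkN : k = N := by exact_mod_cast hk'.symm
        rw [hkN]
        have c1 : Q.coeff N = 1 := by rw [← hQdeg]; exact hQmonic.coeff_natDegree
        have c2 : (P p m).coeff N = 1 := by rw [← hPdeg]; exact (monic_P p m).coeff_natDegree
        have c3 : (Polynomial.C ((P p m).eval Y)).coeff N = 0 := by
          rw [Polynomial.coeff_C, if_neg hNpos.ne']
        rw [hD, Polynomial.coeff_sub, Polynomial.coeff_sub, c1, c2, c3]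
        ring
      · have hkN : N < k := by exact_mod_cast hk'
        have c1 : Q.coeff k = 0 := Polynomial.coeff_eq_zero_of_natDegree_lt (hQdeg ▸ hkN)
        have c2 : (P p m).coeff k = 0 := Polynomial.coeff_eq_zero_of_natDegree_lt (hPdeg ▸ hkN)
        have c3 : (Polynomial.C ((P p m).eval Y)).coeff k = 0 := by
          rw [Polynomial.coeff_C, if_neg (by omega)]
        simp [hD, c1, c2, c3]
  have hfinal := congrArg
    (Polynomial.eval (X (Sum.inr false) : MvPolynomial (Fin m ⊕ Bool) (ZMod p))) hDzero
  rw [hD, hQ] at hfinal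
  simp only [Polynomial.eval_sub, Polynomial.eval_C, Polynomial.eval_zero,
    Polynomial.eval_comp, Polynomial.eval_add, Polynomial.eval_X] at hfinal
  rw [eval_P, eval_P, eval_P] at hfinal
  linear_combination hfinal
end

section
/- For p an odd prime, the polynomials z^{(r)} = ∑_{i=1}^{n} (y_{2i-1}^{p^{r+1}} y_{2i} − y_{2i-1} y_{2i}^{p^{r+1}}) ∈ F_p[y_1,…,y_{2n}] are invariant under the action of the symplectic group Sp_{2n}(F_p) acting linearly on the variables y_1,…,y_{2n} preserving the standard symplectic form y_1∧y_2 + ⋯ + y_{2n-1}∧y_{2n}. -/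
open MvPolynomial Finset

/-- `z^{(r)} = ∑_{i=1}^{n} (y_{2i-1}^{p^{r+1}} y_{2i} − y_{2i-1} y_{2i}^{p^{r+1}})`, where the
variable `Sum.inl i` is `y_{2i-1}` and `Sum.inr i` is `y_{2i}`. -/
noncomputable def zpol (p : ℕ) [Fact p.Prime] (n r : ℕ) :
    MvPolynomial (Fin n ⊕ Fin n) (ZMod p) :=
  ∑ i : Fin n,
    (X (Sum.inl i) ^ p ^ (r + 1) * X (Sum.inr i)
      - X (Sum.inl i) * X (Sum.inr i) ^ p ^ (r + 1))

/-- For `p` an odd prime, the polynomials `z^{(r)}` are invariant under the linear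
substitution action of the symplectic group `Sp_{2n}(F_p)` on the variables. -/
theorem zpol_symplectic_invariant (p : ℕ) [Fact p.Prime] (hodd : Odd p) (n r : ℕ)
    (g : Matrix (Fin n ⊕ Fin n) (Fin n ⊕ Fin n) (ZMod p))
    (hg : g ∈ Matrix.symplecticGroup (Fin n) (ZMod p)) :
    aeval (fun v => ∑ w, C (g v w) * X w) (zpol p n r) = zpol p n r := by
  classical
  set q := p ^ (r + 1) with hq
  -- entrywise symplectic identity
  have hE : ∀ w w' : Fin n ⊕ Fin n,
      ∑ i : Fin n, (g (Sum.inl i) w * g (Sum.inr i) w' - g (Sum.inr i) w * g (Sum.inl i) w')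
        = -(Matrix.J (Fin n) (ZMod p) w w') := by
    intro w w'
    have hJ := (SymplecticGroup.mem_iff').mp hg
    have h2 := congrFun (congrFun hJ w) w'
    rw [← h2]
    simp only [Matrix.mul_apply, Matrix.transpose_apply, Matrix.J, Matrix.fromBlocks,
      Fintype.sum_sum_type, Sum.elim_inl, Sum.elim_inr, Matrix.of_apply, Matrix.zero_apply,
      Matrix.one_apply, Matrix.neg_apply, mul_ite, ite_mul, mul_one, mul_zero, zero_mul, one_mul,
      Finset.sum_ite_eq, Finset.sum_ite_eq', Finset.mem_univ, if_true, mul_neg, neg_mul, neg_zero,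
      zero_add, add_zero, Finset.sum_const_zero, Finset.sum_add_distrib, Finset.sum_sub_distrib,
      Finset.sum_neg_distrib]
    ring
  -- Frobenius linearity
  have hfrob : ∀ v : Fin n ⊕ Fin n,
      ((∑ w, C (g v w) * X w : MvPolynomial (Fin n ⊕ Fin n) (ZMod p)) ^ q)
        = ∑ w, C (g v w) * X w ^ q := by
    intro v
    rw [hq, sum_pow_char_pow]
    exact Finset.sum_congr rfl fun w _ => by rw [mul_pow, ← map_pow, ZMod.pow_card_pow]
  have main : ∀ i : Fin n,
      ((∑ w, C (g (Sum.inl i) w) * X w ^ q) * (∑ w, C (g (Sum.inr i) w) * X w)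
        - (∑ w, C (g (Sum.inl i) w) * X w) * (∑ w, C (g (Sum.inr i) w) * X w ^ q))
      = ∑ w, ∑ w', (C (g (Sum.inl i) w) * C (g (Sum.inr i) w')
          - C (g (Sum.inr i) w) * C (g (Sum.inl i) w')) * (X w ^ q * X w') := by
    intro i
    rw [Finset.sum_mul_sum, Finset.sum_mul_sum,
      Finset.sum_comm (s := univ) (t := univ)
        (f := fun w w' => (C (g (Sum.inl i) w) * X w) * (C (g (Sum.inr i) w') * X w' ^ q)),
      ← Finset.sum_sub_distrib]
    refine Finset.sum_congr rfl fun w _ => ?_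
    rw [← Finset.sum_sub_distrib]
    refine Finset.sum_congr rfl fun w' _ => ?_
    ring
  calc aeval (fun v => ∑ w, C (g v w) * X w) (zpol p n r)
      = ∑ i : Fin n, ∑ w, ∑ w', (C (g (Sum.inl i) w) * C (g (Sum.inr i) w')
          - C (g (Sum.inr i) w) * C (g (Sum.inl i) w')) * (X w ^ q * X w') := by
        rw [zpol, map_sum]
        simp only [map_sub, map_mul, map_pow, aeval_X]
        exact Finset.sum_congr rfl fun i _ => by rw [hfrob, hfrob]; exact main i
    _ = ∑ w, ∑ w', (∑ i : Fin n, (C (g (Sum.inl i) w) * C (g (Sum.inr i) w')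
          - C (g (Sum.inr i) w) * C (g (Sum.inl i) w'))) * (X w ^ q * X w') := by
        rw [Finset.sum_comm]
        refine Finset.sum_congr rfl fun w _ => ?_
        rw [Finset.sum_comm, ← Finset.sum_congr rfl fun w' _ => (Finset.sum_mul _ _ _)]
    _ = ∑ w, ∑ w', C (-(Matrix.J (Fin n) (ZMod p) w w')) * (X w ^ q * X w') := by
        refine Finset.sum_congr rfl fun w _ => Finset.sum_congr rfl fun w' _ => ?_
        simp only [← C_mul, ← C_sub]
        rw [← map_sum, hE]
    _ = zpol p n r := by
        rw [zpol]
        simp only [Matrix.J, Matrix.fromBlocks, Fintype.sum_sum_type, Sum.elim_inl, Sum.elim_inr,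
          Matrix.of_apply, Matrix.zero_apply, Matrix.one_apply, Matrix.neg_apply, neg_zero,
          neg_neg, apply_ite C, C_0, C_1, map_neg, ite_mul, zero_mul, one_mul, neg_mul,
          Finset.sum_ite_eq, Finset.sum_ite_eq', Finset.mem_univ, if_true, add_zero, zero_add,
          Finset.sum_const_zero, Finset.sum_neg_distrib]
        rw [neg_add, neg_neg, ← Finset.sum_neg_distrib, ← Finset.sum_add_distrib]
        refine Finset.sum_congr rfl fun a _ => ?_
        ring
end
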